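/- Let d > 1 be odd and n ≥ 2, and suppose (S, q, λ) is a set of non-contextual value assignments for a state ρ with pairwise distinct value assignments λ_ν given by characters ω^{[φ(ν),·]} for an injective φ : S → V. Then W_ρ(u) = Σ_{ν ∈ S} δ_{u + φ(ν), 0} q(ν); in particular, for each u ∈ V with −u = φ(ν) for some ν ∈ S, W_ρ(u) = q(ν), and W_ρ(u) = 0 if −u is not in the image of φ. -/

import Mathlib

open Complex Matrix BigOperators Finset
open scoped ComplexOrder

noncomputable section

/-- ω = e^{2πi/d} -/
def omeg (d : ℕ) : ℂ := Complex.exp (2 * Real.pi * Complex.I / d)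

/-- ω raised to a `ZMod d` exponent. -/
def wpow (d : ℕ) [NeZero d] (x : ZMod d) : ℂ := omeg d ^ x.val

/-- standard inner product on `(ZMod d)^n` -/
def ip {d n : ℕ} (a b : Fin n → ZMod d) : ZMod d := ∑ i, a i * b i

/-- the phase space `V = Z_d^n × Z_d^n` -/
abbrev PS (d n : ℕ) := (Fin n → ZMod d) × (Fin n → ZMod d)

/-- symplectic form `[u,v] = (u_Z|v_X) − (u_X|v_Z)` -/
def symp {d n : ℕ} (u v : PS d n) : ZMod d := ip u.1 v.2 - ip u.2 v.1

/-- `Z^a = Z^{a_1} ⊗ ⋯ ⊗ Z^{a_n}` : diagonal matrix with entries `ω^{(a|k)}` -/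
def Zop (d n : ℕ) [NeZero d] (a : Fin n → ZMod d) :
    Matrix (Fin n → ZMod d) (Fin n → ZMod d) ℂ :=
  Matrix.of fun k l => if k = l then wpow d (ip a k) else 0

/-- `X^a = X^{a_1} ⊗ ⋯ ⊗ X^{a_n}` : shift matrix `|l⟩ ↦ |l + a⟩` -/
def Xop (d n : ℕ) [NeZero d] (a : Fin n → ZMod d) :
    Matrix (Fin n → ZMod d) (Fin n → ZMod d) ℂ :=
  Matrix.of fun k l => if k = l + a then 1 else 0

/-- Heisenberg–Weyl operator `T_u = ω^{-(u_Z|u_X)/2} Z^{u_Z} X^{u_X}` -/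
def HW (d n : ℕ) [NeZero d] (u : PS d n) :
    Matrix (Fin n → ZMod d) (Fin n → ZMod d) ℂ :=
  wpow d (-((2 : ZMod d)⁻¹ * ip u.1 u.2)) • (Zop d n u.1 * Xop d n u.2)

/-- phase-point operator `A_u = d^{-n} Σ_v ω^{[u,v]} T_v` -/
def phasePoint (d n : ℕ) [NeZero d] (u : PS d n) :
    Matrix (Fin n → ZMod d) (Fin n → ZMod d) ℂ :=
  ((d : ℂ) ^ n)⁻¹ • ∑ v : PS d n, wpow d (symp u v) • HW d n v

-- auxiliary lemmas
lemma omeg_prim (d : ℕ) [NeZero d] : IsPrimitiveRoot (omeg d) d :=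
  Complex.isPrimitiveRoot_exp d (NeZero.ne d)

lemma omeg_pow_d (d : ℕ) [NeZero d] : omeg d ^ d = 1 := (omeg_prim d).pow_eq_one

lemma omeg_pow_mod (d : ℕ) [NeZero d] (x : ℕ) : omeg d ^ (x % d) = omeg d ^ x := by
  conv_rhs => rw [← Nat.mod_add_div x d, pow_add, pow_mul, omeg_pow_d, one_pow, mul_one]

lemma wpow_zero (d : ℕ) [NeZero d] : wpow d 0 = 1 := by
  simp [wpow, ZMod.val_zero]

lemma wpow_add (d : ℕ) [NeZero d] (a b : ZMod d) :
    wpow d (a + b) = wpow d a * wpow d b := by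
  rw [wpow, wpow, wpow, ZMod.val_add, omeg_pow_mod, pow_add]

lemma wpow_mul (d : ℕ) [NeZero d] (a b : ZMod d) :
    wpow d (a * b) = (omeg d ^ a.val) ^ b.val := by
  rw [wpow, ZMod.val_mul, omeg_pow_mod, pow_mul]

lemma sum_zmod_val {d : ℕ} [NeZero d] (f : ℕ → ℂ) :
    ∑ x : ZMod d, f x.val = ∑ k ∈ Finset.range d, f k := by
  refine Finset.sum_nbij' (fun x => x.val) (fun k => (k : ZMod d)) ?_ ?_ ?_ ?_ ?_ <;>
    simp +contextual [ZMod.val_lt, ZMod.val_natCast_of_lt, ZMod.natCast_val,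
      ZMod.natCast_eq_zero_iff, Nat.mod_eq_of_lt, ZMod.natCast_rightInverse]

lemma sum_wpow_mul (d : ℕ) [NeZero d] (c : ZMod d) :
    ∑ x : ZMod d, wpow d (c * x) = if c = 0 then (d : ℂ) else 0 := by
  by_cases hc : c = 0
  · simp [hc, wpow_zero]
  · simp only [hc, if_false]
    have hcv : 0 < c.val := Nat.pos_of_ne_zero (fun h => hc (by
      have := ZMod.val_cast_of_lt (show 0 < d from Nat.pos_of_ne_zero (NeZero.ne d))
      exact (ZMod.val_eq_zero _).mp h))
    have hne : omeg d ^ c.val ≠ 1 :=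
      (omeg_prim d).pow_ne_one_of_pos_of_lt hcv.ne' (ZMod.val_lt c)
    calc ∑ x : ZMod d, wpow d (c * x) = ∑ x : ZMod d, (omeg d ^ c.val) ^ x.val := by
          simp [wpow_mul]
      _ = ∑ k ∈ Finset.range d, (omeg d ^ c.val) ^ k := sum_zmod_val _
      _ = 0 := by
          rw [geom_sum_eq hne]
          have : (omeg d ^ c.val) ^ d = 1 := by
            rw [← pow_mul, mul_comm, pow_mul, omeg_pow_d, one_pow]
          simp [this]


lemma wpow_sum (d : ℕ) [NeZero d] {ι : Type*} (s : Finset ι) (g : ι → ZMod d) :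
    wpow d (∑ i ∈ s, g i) = ∏ i ∈ s, wpow d (g i) := by
  induction s using Finset.cons_induction with
  | empty => simp [wpow_zero]
  | cons a s ha ih => rw [Finset.sum_cons, Finset.prod_cons, wpow_add, ih]

lemma sum_wpow_ip {d n : ℕ} [NeZero d] (w : Fin n → ZMod d) :
    ∑ a : Fin n → ZMod d, wpow d (ip w a) = if w = 0 then (d : ℂ) ^ n else 0 := by
  have : ∑ a : Fin n → ZMod d, wpow d (ip w a)
      = ∏ i : Fin n, ∑ x : ZMod d, wpow d (w i * x) := by
    rw [Finset.prod_univ_sum]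
    simp only [Fintype.piFinset_univ]
    exact Finset.sum_congr rfl fun a _ => by rw [ip, wpow_sum]
  rw [this]
  by_cases hw : w = 0
  · simp [hw, sum_wpow_mul, wpow_zero]
  · obtain ⟨i, hi⟩ := Function.ne_iff.mp hw
    rw [if_neg hw]
    have hi' : w i ≠ 0 := fun h => hi (by simp [h])
    exact Finset.prod_eq_zero (Finset.mem_univ i) (by simp [sum_wpow_mul, hi'])

lemma sum_wpow_symp {d n : ℕ} [NeZero d] (w : PS d n) :
    ∑ v : PS d n, wpow d (symp w v) = if w = 0 then ((d : ℂ) ^ n) ^ 2 else 0 := by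
  have : ∀ v : PS d n, wpow d (symp w v) = wpow d (ip (-w.2) v.1) * wpow d (ip w.1 v.2) := by
    intro v
    rw [← wpow_add, symp, sub_eq_add_neg, add_comm]
    congr 1
    simp [ip, Finset.sum_neg_distrib]
  rw [Fintype.sum_prod_type]
  simp only [this]
  rw [← Finset.sum_mul_sum]
  rw [sum_wpow_ip, sum_wpow_ip]
  by_cases h1 : w.1 = 0 <;> by_cases h2 : w.2 = 0
  · simp [Prod.ext_iff, h1, h2, neg_eq_zero, sq]
  · simp [Prod.ext_iff, h1, h2, neg_eq_zero]
  · simp [Prod.ext_iff, h1, h2, neg_eq_zero]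
  · simp [Prod.ext_iff, h1, h2, neg_eq_zero]

lemma symp_add_left {d n : ℕ} (u w v : PS d n) :
    symp (u + w) v = symp u v + symp w v := by
  simp only [symp, ip, Prod.fst_add, Prod.snd_add, Pi.add_apply, add_mul,
    Finset.sum_add_distrib]
  ring


/-- spectral projector `Π_u^s = (1/d) Σ_k ω^{-ks} T_u^k` -/
def specProj (d n : ℕ) [NeZero d] (a : PS d n) (s : ZMod d) :
    Matrix (Fin n → ZMod d) (Fin n → ZMod d) ℂ :=
  (d : ℂ)⁻¹ • ∑ k : ZMod d, wpow d (-(k * s)) • (HW d n a) ^ (k.val)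

theorem stmt17 (d n : ℕ) [NeZero d] (hd : Odd d) (hd1 : 1 < d) (hn : 2 ≤ n)
    (ρ : Matrix (Fin n → ZMod d) (Fin n → ZMod d) ℂ)
    (hρ : ρ.PosSemidef) (htr : ρ.trace = 1)
    (S : Type*) [Fintype S] (q : S → ℝ)
    (hq : ∀ ν, 0 ≤ q ν) (hq1 : ∑ ν, q ν = 1)
    (φ : S → PS d n) (hφ : Function.Injective φ)
    (hpred : ∀ v : PS d n,
      (HW d n v * ρ).trace = ∑ ν, wpow d (symp (φ ν) v) * (q ν : ℂ)) :
    ∀ u : PS d n,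
      (((d : ℂ) ^ n)⁻¹ * (phasePoint d n u * ρ).trace
        = ∑ ν, if u + φ ν = 0 then (q ν : ℂ) else 0) ∧
      (∀ ν, φ ν = -u →
        ((d : ℂ) ^ n)⁻¹ * (phasePoint d n u * ρ).trace = (q ν : ℂ)) ∧
      ((∀ ν, φ ν ≠ -u) →
        ((d : ℂ) ^ n)⁻¹ * (phasePoint d n u * ρ).trace = 0) := by
  intro u
  have hdc : (d : ℂ) ^ n ≠ 0 :=
    pow_ne_zero _ (Nat.cast_ne_zero.mpr (NeZero.ne d))
  have key : ((d : ℂ) ^ n)⁻¹ * (phasePoint d n u * ρ).trace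
      = ∑ ν, if u + φ ν = 0 then (q ν : ℂ) else 0 := by
    rw [phasePoint, Matrix.smul_mul, Matrix.trace_smul, Matrix.sum_mul, Matrix.trace_sum]
    simp only [Matrix.smul_mul, Matrix.trace_smul, smul_eq_mul, hpred]
    have hswap : ∑ v : PS d n, wpow d (symp u v) * ∑ ν, wpow d (symp (φ ν) v) * (q ν : ℂ)
        = ∑ ν, (q ν : ℂ) * ∑ v : PS d n, wpow d (symp (u + φ ν) v) := by
      simp only [Finset.mul_sum]
      rw [Finset.sum_comm]
      refine Finset.sum_congr rfl fun ν _ => Finset.sum_congr rfl fun v _ => ?_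
      rw [symp_add_left, wpow_add]
      ring
    rw [hswap]
    simp only [sum_wpow_symp, mul_ite, mul_zero, Finset.mul_sum]
    refine Finset.sum_congr rfl fun ν _ => ?_
    by_cases h : u + φ ν = 0
    · rw [if_pos h, if_pos h, sq]
      field_simp
    · simp [h]
  refine ⟨key, fun ν hν => ?_, fun hall => ?_⟩
  · rw [key]
    rw [Finset.sum_eq_single ν]
    · simp [hν]
    · intro ν' _ hne
      rw [if_neg]
      intro h
      exact hne (hφ (by rw [hν, eq_comm, ← eq_neg_of_add_eq_zero_right h]))
    · intro h; exact absurd (Finset.mem_univ ν) h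
  · rw [key]
    refine Finset.sum_eq_zero fun ν _ => ?_
    rw [if_neg]
    intro h
    exact hall ν (eq_neg_of_add_eq_zero_right h)
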